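/- Let c⃗ = ⟨c_α : α < ω₃, α limit⟩ be a □_{ω₂}-sequence. Then there exists a sequence ⟨A_{η,ξ} : η < ω₃, ξ < ω₂⟩ of sets of ordinals satisfying: (1) for all η < ω₃, the sequence ⟨A_{η,ξ} : ξ < ω₂⟩ is ⊆-increasing and continuous (taking unions at limit ξ), each A_{η,ξ} has cardinality less than ω₂, and ⋃_{ξ<ω₂} A_{η,ξ} = η; and (2) whenever β is a limit point of c_α, then for all ξ < ω₂, A_{β,ξ} = A_{α,ξ} ∩ β. -/

import Mathlib

noncomputable section

abbrev Ordi : Type 1 := Ordinal.{0}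

/-- The ordinal `ω₂`. -/
def w2 : Ordi := (Cardinal.aleph 2).ord

/-- The ordinal `ω₃`. -/
def w3 : Ordi := (Cardinal.aleph 3).ord

/-- `C` is a club (closed and unbounded) subset of `κ`. -/
def IsClubIn (C : Set Ordi) (κ : Ordi) : Prop :=
  C ⊆ Set.Iio κ ∧ (∀ α < κ, ∃ β ∈ C, α ≤ β) ∧
    ∀ α, 0 < α → α < κ → (∀ β < α, ∃ γ ∈ C, β < γ ∧ γ < α) → α ∈ C

/-- `β` is a limit point of the set `C`. -/
def IsAcc (β : Ordi) (C : Set Ordi) : Prop :=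
  0 < β ∧ ∀ γ < β, ∃ δ ∈ C, γ < δ ∧ δ < β

/-- The order type of a set of ordinals. -/
def otype (C : Set Ordi) : Ordinal.{1} :=
  Ordinal.type (Subrel ((· < ·) : Ordi → Ordi → Prop) (· ∈ C))

section AuxSquare
open Ordinal Set Cardinal

lemma w2_isLimit : Order.IsSuccLimit w2 := Cardinal.isSuccLimit_ord (aleph0_le_aleph 2)

lemma otype_mono {S T : Set Ordi} (h : S ⊆ T) : otype S ≤ otype T :=
  RelEmbedding.ordinal_type_le ⟨⟨Set.inclusion h, Set.inclusion_injective h⟩, Iff.rfl⟩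

lemma otype_lt {S : Set Ordi} {γ : Ordi} (h : γ ∈ S) :
    otype (S ∩ Set.Iio γ) < otype S := by
  refine PrincipalSeg.ordinal_type_lt
    ⟨⟨⟨fun x => ⟨x.1, x.2.1⟩, ?_⟩, Iff.rfl⟩, ⟨γ, h⟩, ?_⟩
  · intro a b hab
    injection hab with h
    exact Subtype.ext h
  · rintro ⟨b, hb⟩
    constructor
    · rintro ⟨⟨a, ha⟩, heq⟩
      have hv : a = b := congrArg Subtype.val heq
      exact hv ▸ ha.2
    · intro hlt
      exact ⟨⟨b, hb, hlt⟩, rfl⟩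

open Classical in
/-- Embedding of a small set into `Iio w2`. -/
def emb (S : Set Ordi) : ↥S → Ordi :=
  if h : Nonempty (↥S ↪ ↥(Set.Iio w2)) then fun x => (h.some x).val else fun _ => 0

lemma emb_inj {S : Set Ordi} (h : Nonempty (↥S ↪ ↥(Set.Iio w2))) :
    Function.Injective (emb S) := by
  unfold emb
  rw [dif_pos h]
  intro a b hab
  exact h.some.injective (Subtype.ext hab)

lemma emb_lt {S : Set Ordi} (h : Nonempty (↥S ↪ ↥(Set.Iio w2))) (x : ↥S) :
    emb S x < w2 := by
  unfold emb
  rw [dif_pos h]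
  exact (h.some x).2

/-- The `ξ`-th stage of a filtration of `S`. -/
def filt (S : Set Ordi) (ξ : Ordi) : Set Ordi :=
  {x | ∃ h : x ∈ S, emb S ⟨x, h⟩ < ξ}

lemma filt_subset (S : Set Ordi) (ξ : Ordi) : filt S ξ ⊆ S := fun _ hx => hx.1

lemma filt_mono {S : Set Ordi} {ξ ξ' : Ordi} (h : ξ ≤ ξ') : filt S ξ ⊆ filt S ξ' :=
  fun _ hx => ⟨hx.1, lt_of_lt_of_le hx.2 h⟩

lemma filt_limit {S : Set Ordi} {ξ : Ordi} (hξ : Order.IsSuccLimit ξ) {x : Ordi}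
    (hx : x ∈ filt S ξ) : ∃ ζ < ξ, x ∈ filt S ζ := by
  obtain ⟨h, hlt⟩ := hx
  exact ⟨emb S ⟨x, h⟩ + 1, hξ.succ_lt hlt, h, lt_add_one _⟩

lemma filt_cover {S : Set Ordi} (hS : Nonempty (↥S ↪ ↥(Set.Iio w2))) {x : Ordi}
    (hx : x ∈ S) : ∃ ξ < w2, x ∈ filt S ξ :=
  ⟨emb S ⟨x, hx⟩ + 1, w2_isLimit.succ_lt (emb_lt hS ⟨x, hx⟩), hx, lt_add_one _⟩

lemma mk_filt_le {S : Set Ordi} (hS : Nonempty (↥S ↪ ↥(Set.Iio w2))) (ξ : Ordi) :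
    Cardinal.mk ↥(filt S ξ) ≤ Cardinal.lift.{1} ξ.card := by
  rw [← Ordinal.mk_Iio_ordinal]
  refine Cardinal.mk_le_of_injective (f := fun x => ⟨emb S ⟨x.1, x.2.choose⟩, x.2.choose_spec⟩) ?_
  intro a b hab
  have h2 := emb_inj hS (Subtype.ext_iff.mp hab)
  injection h2 with h3
  exact Subtype.ext h3

lemma card_le_aleph1 {ξ : Ordi} (hξ : ξ < w2) : ξ.card ≤ Cardinal.aleph 1 := by
  have : ξ.card < Cardinal.aleph 2 := Cardinal.lt_ord.mp hξ
  have h2 : ((2 : Ordinal)) = Order.succ 1 := by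
    rw [← Ordinal.add_one_eq_succ]; norm_num
  rw [h2, Cardinal.aleph_succ] at this
  exact Order.lt_succ_iff.mp this

lemma embed_exists {S : Set Ordi} {γ : Ordi} (hsub : S ⊆ Set.Iio γ) (hγ : γ < w3) :
    Nonempty (↥S ↪ ↥(Set.Iio w2)) := by
  rw [← Cardinal.le_def]
  have h1 : Cardinal.mk ↥S ≤ Cardinal.mk ↥(Set.Iio γ) := Cardinal.mk_le_mk_of_subset hsub
  refine h1.trans ?_
  rw [Ordinal.mk_Iio_ordinal, Ordinal.mk_Iio_ordinal]
  refine Cardinal.lift_le.mpr ?_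
  have hlt : γ.card < Cardinal.aleph 3 := Cardinal.lt_ord.mp hγ
  have h3 : ((3 : Ordinal)) = Order.succ 2 := by
    rw [← Ordinal.add_one_eq_succ]; norm_num
  rw [h3, Cardinal.aleph_succ] at hlt
  have : w2.card = Cardinal.aleph 2 := Cardinal.card_ord _
  rw [this]
  exact Order.lt_succ_iff.mp hlt

open Classical in
/-- The matrix. -/
def Amat (c : Ordi → Set Ordi) (η ξ : Ordi) : Set Ordi :=
  if Order.IsSuccLimit η then
    ⋃ γ ∈ {γ ∈ c η | otype (c η ∩ Set.Iio γ) < Ordinal.lift.{1} ξ},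
      insert γ (filt (Set.Ico (sSup (c η ∩ Set.Iio γ)) γ) ξ)
  else filt (Set.Iio η) ξ


lemma pos_strictMono {S : Set Ordi} {γ₁ γ₂ : Ordi} (h1 : γ₁ ∈ S) (h12 : γ₁ < γ₂) :
    otype (S ∩ Set.Iio γ₁) < otype (S ∩ Set.Iio γ₂) := by
  have hset : (S ∩ Set.Iio γ₂) ∩ Set.Iio γ₁ = S ∩ Set.Iio γ₁ := by
    ext x
    constructor
    · rintro ⟨⟨h, _⟩, h'⟩; exact ⟨h, h'⟩
    · rintro ⟨h, h'⟩; exact ⟨⟨h, h'.trans h12⟩, h'⟩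
  rw [← hset]
  exact otype_lt ⟨h1, h12⟩

lemma pos_inj {S : Set Ordi} {γ₁ γ₂ : Ordi} (h1 : γ₁ ∈ S) (h2 : γ₂ ∈ S)
    (h : otype (S ∩ Set.Iio γ₁) = otype (S ∩ Set.Iio γ₂)) : γ₁ = γ₂ := by
  rcases lt_trichotomy γ₁ γ₂ with hlt | heq | hgt
  · exact absurd h (pos_strictMono h1 hlt).ne
  · exact heq
  · exact absurd h.symm (pos_strictMono h2 hgt).ne

lemma mem_Amat_limit {c : Ordi → Set Ordi} {η : Ordi} (hη : Order.IsSuccLimit η) (ξ x : Ordi) :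
    x ∈ Amat c η ξ ↔ ∃ γ, (γ ∈ c η ∧ otype (c η ∩ Set.Iio γ) < Ordinal.lift.{1, 0} ξ) ∧
      (x = γ ∨ x ∈ filt (Set.Ico (sSup (c η ∩ Set.Iio γ)) γ) ξ) := by
  unfold Amat
  rw [if_pos hη]
  simp only [Set.mem_iUnion, Set.mem_setOf_eq, Set.mem_insert_iff, exists_prop]

lemma Amat_nonlimit {c : Ordi → Set Ordi} {η : Ordi} (hη : ¬ Order.IsSuccLimit η) (ξ : Ordi) :
    Amat c η ξ = filt (Set.Iio η) ξ := by
  unfold Amat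
  rw [if_neg hη]

/-- find a small index witnessing `pos < lift w2` -/
lemma exists_lt_lift {p : Ordinal.{1}} {ξ : Ordi} (h : p < Ordinal.lift.{1, 0} ξ)
    (hξ : Order.IsSuccLimit ξ) : ∃ ζ < ξ, p < Ordinal.lift.{1, 0} ζ := by
  obtain ⟨x, hx, hlift⟩ := Ordinal.lt_lift_iff.mp h
  refine ⟨x + 1, hξ.succ_lt hx, ?_⟩
  rw [Ordinal.lift_add, Ordinal.lift_one, ← hlift]
  exact lt_add_one _

end AuxSquare

/-- Given a `□_{ω₂}`-sequence `c⃗ = ⟨c_α : α < ω₃, α limit⟩`, there is a matrix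
`⟨A_{η,ξ} : η < ω₃, ξ < ω₂⟩` such that for every `η < ω₃` the sequence
`⟨A_{η,ξ} : ξ < ω₂⟩` is an increasing continuous sequence of sets of size
less than `ω₂` with union `η`, and whenever `β` is a limit point of `c_α`
(for limit `α < ω₃`), `A_{β,ξ} = A_{α,ξ} ∩ β` for all `ξ < ω₂`. -/
theorem square_matrix (c : Ordi → Set Ordi)
    (hc_club : ∀ α, α < w3 → Order.IsSuccLimit α → IsClubIn (c α) α)
    (hc_ot : ∀ α, α < w3 → Order.IsSuccLimit α → otype (c α) ≤ Ordinal.lift.{1, 0} w2)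
    (hc_coh : ∀ α, α < w3 → Order.IsSuccLimit α →
      ∀ β < α, IsAcc β (c α) → c α ∩ Set.Iio β = c β) :
    ∃ A : Ordi → Ordi → Set Ordi,
      (∀ η < w3,
        (∀ ξ < w2, Cardinal.mk ↥(A η ξ) < Cardinal.lift.{1, 0} (Cardinal.aleph 2)) ∧
        (∀ ξ ξ' : Ordi, ξ ≤ ξ' → ξ' < w2 → A η ξ ⊆ A η ξ') ∧
        (∀ ξ, ξ < w2 → Order.IsSuccLimit ξ → A η ξ = ⋃ ζ ∈ Set.Iio ξ, A η ζ) ∧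
        (⋃ ξ ∈ Set.Iio w2, A η ξ) = Set.Iio η) ∧
      (∀ α, α < w3 → Order.IsSuccLimit α →
        ∀ β < α, IsAcc β (c α) → ∀ ξ < w2, A β ξ = A α ξ ∩ Set.Iio β) := by
  classical
  have hw2lim := w2_isLimit
  refine ⟨Amat c, ?_, ?_⟩
  · intro η hη
    by_cases hlim : Order.IsSuccLimit η
    · obtain ⟨hsub, hunb, hcl⟩ := hc_club η hη hlim
      have hot := hc_ot η hη hlim
      have hembγ : ∀ γ ∈ c η,
          Nonempty (↥(Set.Ico (sSup (c η ∩ Set.Iio γ)) γ) ↪ ↥(Set.Iio w2)) := by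
        intro γ hγ
        exact embed_exists (fun x hx => hx.2) ((hsub hγ).trans hη)
      have hmono : ∀ ξ ξ' : Ordi, ξ ≤ ξ' → Amat c η ξ ⊆ Amat c η ξ' := by
        intro ξ ξ' hle x hx
        rw [mem_Amat_limit hlim] at hx ⊢
        obtain ⟨γ, ⟨hγ, hpos⟩, hx⟩ := hx
        refine ⟨γ, ⟨hγ, hpos.trans_le (Ordinal.lift_le.mpr hle)⟩, ?_⟩
        rcases hx with rfl | hx
        · exact Or.inl rfl
        · exact Or.inr (filt_mono hle hx)
      refine ⟨?_, fun ξ ξ' h _ => hmono ξ ξ' h, ?_, ?_⟩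
      · -- cardinality
        intro ξ hξ
        have hAeq : Amat c η ξ =
            ⋃ γ ∈ {γ ∈ c η | otype (c η ∩ Set.Iio γ) < Ordinal.lift.{1, 0} ξ},
              insert γ (filt (Set.Ico (sSup (c η ∩ Set.Iio γ)) γ) ξ) := by
          unfold Amat
          rw [if_pos hlim]
        set D := {γ ∈ c η | otype (c η ∩ Set.Iio γ) < Ordinal.lift.{1, 0} ξ} with hDdef
        have hDmem : ∀ γ : ↥D, γ.1 ∈ c η ∧ otype (c η ∩ Set.Iio γ.1) < Ordinal.lift.{1, 0} ξ :=
          fun γ => γ.2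
        have hDcard : Cardinal.mk ↥D ≤ Cardinal.lift.{1, 0} ξ.card := by
          rw [← Ordinal.mk_Iio_ordinal]
          have hch : ∀ γ : ↥D, ∃ x < ξ, Ordinal.lift.{1, 0} x = otype (c η ∩ Set.Iio γ.1) :=
            fun γ => Ordinal.lt_lift_iff.mp (hDmem γ).2
          refine Cardinal.mk_le_of_injective
            (f := fun γ => ⟨(hch γ).choose, (hch γ).choose_spec.1⟩) ?_
          intro a b hab
          have h1 : Ordinal.lift.{1, 0} (hch a).choose = Ordinal.lift.{1, 0} (hch b).choose := by
            rw [Subtype.ext_iff] at hab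
            simp only at hab
            rw [hab]
          have h2 : otype (c η ∩ Set.Iio a.1) = otype (c η ∩ Set.Iio b.1) := by
            rw [← (hch a).choose_spec.2, ← (hch b).choose_spec.2, h1]
          exact Subtype.ext (pos_inj (hDmem a).1 (hDmem b).1 h2)
        have hsup : (⨆ γ : ↥D, Cardinal.mk
            ↥(insert γ.1 (filt (Set.Ico (sSup (c η ∩ Set.Iio γ.1)) γ.1) ξ)))
            ≤ Cardinal.lift.{1, 0} ξ.card + 1 := by
          rcases isEmpty_or_nonempty ↥D with h | h
          · rw [ciSup_of_empty]
            exact bot_le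
          · refine ciSup_le' (fun γ => ?_)
            refine (Cardinal.mk_insert_le).trans ?_
            exact add_le_add (mk_filt_le (hembγ γ.1 (hDmem γ).1) ξ) le_rfl
        have hb1 : Cardinal.lift.{1, 0} ξ.card ≤ Cardinal.lift.{1, 0} (Cardinal.aleph 1) :=
          Cardinal.lift_le.mpr (card_le_aleph1 hξ)
        have hinf : Cardinal.aleph0 ≤ Cardinal.lift.{1, 0} (Cardinal.aleph 1) :=
          Cardinal.aleph0_le_lift.mpr (Cardinal.aleph0_le_aleph 1)
        calc Cardinal.mk ↥(Amat c η ξ)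
            ≤ Cardinal.mk ↥D * ⨆ γ : ↥D, Cardinal.mk
              ↥(insert γ.1 (filt (Set.Ico (sSup (c η ∩ Set.Iio γ.1)) γ.1) ξ)) := by
              rw [hAeq]
              exact Cardinal.mk_biUnion_le _ _
          _ ≤ Cardinal.lift.{1, 0} (Cardinal.aleph 1) *
              (Cardinal.lift.{1, 0} (Cardinal.aleph 1) + 1) :=
              mul_le_mul' (hDcard.trans hb1) (hsup.trans (add_le_add hb1 le_rfl))
          _ = Cardinal.lift.{1, 0} (Cardinal.aleph 1) := by
              rw [Cardinal.add_one_eq hinf, Cardinal.mul_eq_self hinf]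
          _ < Cardinal.lift.{1, 0} (Cardinal.aleph 2) :=
              Cardinal.lift_lt.mpr (Cardinal.aleph_lt_aleph.mpr one_lt_two)
      · -- continuity
        intro ξ hξ hξlim
        ext x
        simp only [Set.mem_iUnion, Set.mem_Iio, exists_prop]
        constructor
        · intro hx
          rw [mem_Amat_limit hlim] at hx
          obtain ⟨γ, ⟨hγ, hpos⟩, hx⟩ := hx
          obtain ⟨ζ₂, hζ₂ξ, hζ₂⟩ := exists_lt_lift hpos hξlim
          rcases hx with rfl | hx
          · exact ⟨ζ₂, hζ₂ξ, (mem_Amat_limit hlim ζ₂ x).mpr ⟨x, ⟨hγ, hζ₂⟩, Or.inl rfl⟩⟩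
          · obtain ⟨ζ₁, hζ₁, hxf⟩ := filt_limit hξlim hx
            refine ⟨max ζ₁ ζ₂, max_lt hζ₁ hζ₂ξ, (mem_Amat_limit hlim _ x).mpr
              ⟨γ, ⟨hγ, hζ₂.trans_le (Ordinal.lift_le.mpr (le_max_right ζ₁ ζ₂))⟩,
               Or.inr (filt_mono (le_max_left ζ₁ ζ₂) hxf)⟩⟩
        · rintro ⟨ζ, hζ, hx⟩
          exact hmono ζ ξ hζ.le hx
      · -- union
        ext δ
        simp only [Set.mem_iUnion, Set.mem_Iio, exists_prop]
        constructor
        · rintro ⟨ξ, hξ, hδ⟩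
          rw [mem_Amat_limit hlim] at hδ
          obtain ⟨γ, ⟨hγ, _⟩, hδ⟩ := hδ
          have hγη : γ < η := hsub hγ
          rcases hδ with rfl | hδ
          · exact hγη
          · exact ((filt_subset _ _ hδ).2).trans hγη
        · intro hδ
          by_cases hδc : δ ∈ c η
          · have hpos : otype (c η ∩ Set.Iio δ) < Ordinal.lift.{1, 0} w2 :=
              (otype_lt hδc).trans_le hot
            obtain ⟨ξ, hξ, hξ'⟩ := exists_lt_lift hpos hw2lim
            exact ⟨ξ, hξ, (mem_Amat_limit hlim ξ δ).mpr ⟨δ, ⟨hδc, hξ'⟩, Or.inl rfl⟩⟩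
          · have hT : (c η ∩ Set.Ioi δ).Nonempty := by
              obtain ⟨β, hβ, hle⟩ := hunb δ hδ
              exact ⟨β, hβ, lt_of_le_of_ne hle (fun h => hδc (h ▸ hβ))⟩
            have hγmem := csInf_mem hT
            set γ := sInf (c η ∩ Set.Ioi δ) with hγdef
            have hγc : γ ∈ c η := hγmem.1
            have hδγ : δ < γ := hγmem.2
            have hple : sSup (c η ∩ Set.Iio γ) ≤ δ := by
              apply csSup_le'
              rintro x ⟨hxc, hxγ⟩
              by_contra hxd
              push_neg at hxd
              have hγx : sInf (c η ∩ Set.Ioi δ) ≤ x :=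
                csInf_le (OrderBot.bddBelow _) (show x ∈ c η ∩ Set.Ioi δ from ⟨hxc, hxd⟩)
              exact absurd hγx (not_le.mpr (Set.mem_Iio.mp hxγ))
            obtain ⟨ξ₁, hξ₁, hδf⟩ := filt_cover (hembγ γ hγc) (Set.mem_Ico.mpr ⟨hple, hδγ⟩)
            have hpos : otype (c η ∩ Set.Iio γ) < Ordinal.lift.{1, 0} w2 :=
              (otype_lt hγc).trans_le hot
            obtain ⟨ξ₂, hξ₂, hξ₂'⟩ := exists_lt_lift hpos hw2lim
            refine ⟨max ξ₁ ξ₂, max_lt hξ₁ hξ₂, (mem_Amat_limit hlim _ δ).mpr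
              ⟨γ, ⟨hγc, hξ₂'.trans_le (Ordinal.lift_le.mpr (le_max_right ξ₁ ξ₂))⟩,
               Or.inr (filt_mono (le_max_left ξ₁ ξ₂) hδf)⟩⟩
    · -- non-limit η
      have hemb : Nonempty (↥(Set.Iio η) ↪ ↥(Set.Iio w2)) :=
        embed_exists (fun x hx => hx) hη
      refine ⟨?_, ?_, ?_, ?_⟩
      · intro ξ hξ
        rw [Amat_nonlimit hlim]
        exact lt_of_le_of_lt (mk_filt_le hemb ξ)
          (Cardinal.lift_lt.mpr (Cardinal.lt_ord.mp hξ))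
      · intro ξ ξ' h _
        rw [Amat_nonlimit hlim, Amat_nonlimit hlim]
        exact filt_mono h
      · intro ξ hξ hξlim
        ext x
        simp only [Set.mem_iUnion, Set.mem_Iio, exists_prop, Amat_nonlimit hlim]
        constructor
        · intro hx
          exact filt_limit hξlim hx
        · rintro ⟨ζ, hζ, h⟩
          exact filt_mono hζ.le h
      · ext δ
        simp only [Set.mem_iUnion, Set.mem_Iio, exists_prop, Amat_nonlimit hlim]
        constructor
        · rintro ⟨ξ, _, h⟩
          exact (filt_subset _ _ h : δ ∈ Set.Iio η)
        · intro h
          exact filt_cover hemb h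
  · -- coherence
    intro α hα hαlim β hβα hacc ξ hξ
    obtain ⟨hsubα, hunbα, hclα⟩ := hc_club α hα hαlim
    have hβmem : β ∈ c α := hclα β hacc.1 hβα hacc.2
    have hβlim : Order.IsSuccLimit β := by
      refine Ordinal.isSuccLimit_iff.mpr ⟨hacc.1.ne', Order.isSuccPrelimit_of_succ_lt fun a ha => ?_⟩
      obtain ⟨δ, hδ, h1, h2⟩ := hacc.2 a ha
      exact lt_of_le_of_lt (Order.succ_le_of_lt h1) h2
    have hcoh : c α ∩ Set.Iio β = c β := hc_coh α hα hαlim β hβα hacc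
    have hsupβ : sSup (c α ∩ Set.Iio β) = β := by
      apply le_antisymm
      · exact csSup_le' (fun x hx => hx.2.le)
      · by_contra hcon
        push_neg at hcon
        obtain ⟨δ, hδ, h1, h2⟩ := hacc.2 _ hcon
        have hbdd : BddAbove (c α ∩ Set.Iio β) := ⟨β, fun x hx => hx.2.le⟩
        exact absurd (le_csSup hbdd (show δ ∈ c α ∩ Set.Iio β from ⟨hδ, h2⟩)) (not_le.mpr h1)
    have hsets : ∀ γ, γ < β → c β ∩ Set.Iio γ = c α ∩ Set.Iio γ := by
      intro γ hγ
      rw [← hcoh]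
      ext x
      constructor
      · rintro ⟨⟨h1, _⟩, h2⟩
        exact ⟨h1, h2⟩
      · rintro ⟨h1, h2⟩
        exact ⟨⟨h1, h2.trans hγ⟩, h2⟩
    ext δ
    rw [Set.mem_inter_iff, mem_Amat_limit hβlim, mem_Amat_limit hαlim]
    constructor
    · rintro ⟨γ, ⟨hγβ, hpos⟩, hδ⟩
      have hγmem : γ ∈ c α ∩ Set.Iio β := by
        rw [hcoh]
        exact hγβ
      have hse := hsets γ hγmem.2
      have hδβ : δ < β := by
        rcases hδ with rfl | hδ
        · exact hγmem.2
        · exact ((filt_subset _ _ hδ).2).trans hγmem.2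
      refine ⟨⟨γ, ⟨hγmem.1, ?_⟩, ?_⟩, hδβ⟩
      · rw [← hse]
        exact hpos
      · rw [← hse]
        exact hδ
    · rintro ⟨⟨γ, ⟨hγα, hpos⟩, hδ⟩, hδβ⟩
      rcases lt_trichotomy γ β with hlt | heq | hgt
      · have hse := hsets γ hlt
        have hγβ : γ ∈ c β := by
          rw [← hcoh]
          exact ⟨hγα, hlt⟩
        refine ⟨γ, ⟨hγβ, by rw [hse]; exact hpos⟩, ?_⟩
        rw [hse]
        exact hδ
      · subst heq
        rcases hδ with rfl | hδ
        · exact absurd (Set.mem_Iio.mp hδβ) (lt_irrefl _)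
        · have h1 := filt_subset _ _ hδ
          rw [hsupβ] at h1
          exact absurd h1.1 (not_le.mpr h1.2)
      · rcases hδ with rfl | hδ
        · exact absurd ((Set.mem_Iio.mp hδβ).trans hgt) (lt_irrefl _)
        · have h1 := filt_subset _ _ hδ
          have h2 : β ≤ sSup (c α ∩ Set.Iio γ) :=
            le_csSup (⟨γ, fun x hx => hx.2.le⟩ : BddAbove (c α ∩ Set.Iio γ))
              (show β ∈ c α ∩ Set.Iio γ from ⟨hβmem, hgt⟩)
          exact absurd (h2.trans (Set.mem_Ico.mp h1).1) (not_le.mpr (Set.mem_Iio.mp hδβ))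

end
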